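/- Suppose ∇f is Lipschitz with constant L(f), L > L(f), and x* is an optimal solution of min{f(x) : ‖x‖₀ ≤ s}. Then x* is an L-stationary point and moreover the set P_{C_s}(x* − (1/L)∇f(x*)) is the singleton {x*}. -/

import Mathlib

noncomputable section
open scoped RealInnerProductSpace

/-- the number of nonzero components of `x` -/
def norm0 {n : ℕ} (x : EuclideanSpace ℝ (Fin n)) : ℕ :=
  (Finset.univ.filter fun i => x i ≠ 0).card

/-- the sparsity constraint set `C_s` -/
def Cs (n s : ℕ) : Set (EuclideanSpace ℝ (Fin n)) := {x | norm0 x ≤ s}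

/-- the set-valued Euclidean projection onto `Cs n s` -/
def projCs (n s : ℕ) (w : EuclideanSpace ℝ (Fin n)) : Set (EuclideanSpace ℝ (Fin n)) :=
  {y | y ∈ Cs n s ∧ ∀ z ∈ Cs n s, ‖y - w‖ ≤ ‖z - w‖}

/-- the s-th largest absolute value of a component of `x` -/
def Msval {n : ℕ} (s : ℕ) (x : EuclideanSpace ℝ (Fin n)) : ℝ :=
  (((List.ofFn fun i => |x i|).mergeSort (· ≥ ·)).getD (s - 1) 0)


lemma grad_inner {n : ℕ} (f : EuclideanSpace ℝ (Fin n) → ℝ) (z d : EuclideanSpace ℝ (Fin n)) :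
    ⟪gradient f z, d⟫ = fderiv ℝ f z d := by
  simp [gradient, InnerProductSpace.toDual_symm_apply]

lemma descent {n : ℕ} (f : EuclideanSpace ℝ (Fin n) → ℝ) (hf : Differentiable ℝ f)
    (Lf : ℝ) (hlip : ∀ x y, ‖gradient f x - gradient f y‖ ≤ Lf * ‖x - y‖)
    (x y : EuclideanSpace ℝ (Fin n)) :
    f y ≤ f x + ⟪gradient f x, y - x⟫ + Lf / 2 * ‖y - x‖ ^ 2 := by
  set d := y - x with hd
  set h : ℝ → ℝ := fun t =>
    f (x + t • d) - t * ⟪gradient f x, d⟫ - Lf / 2 * t ^ 2 * ‖d‖ ^ 2 with hh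
  have hderiv : ∀ t : ℝ, HasDerivAt h
      (⟪gradient f (x + t • d), d⟫ - ⟪gradient f x, d⟫ - Lf * t * ‖d‖ ^ 2) t := by
    intro t
    have h1 : HasDerivAt (fun t : ℝ => x + t • d) d t := by
      simpa using ((hasDerivAt_id t).smul_const d).const_add x
    have h2 : HasDerivAt (fun t : ℝ => f (x + t • d)) (fderiv ℝ f (x + t • d) d) t :=
      (hf (x + t • d)).hasFDerivAt.comp_hasDerivAt t h1
    rw [← grad_inner] at h2
    have h3 : HasDerivAt (fun t : ℝ => t * ⟪gradient f x, d⟫) (⟪gradient f x, d⟫) t := by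
      simpa using (hasDerivAt_id t).mul_const _
    have h4 : HasDerivAt (fun t : ℝ => Lf / 2 * t ^ 2 * ‖d‖ ^ 2) (Lf * t * ‖d‖ ^ 2) t := by
      have := ((hasDerivAt_pow 2 t).const_mul (Lf / 2)).mul_const (‖d‖ ^ 2)
      convert this using 1
      all_goals first | rfl | (push_cast; ring)
    exact (h2.sub h3).sub h4
  have hmono : h 1 ≤ h 0 := by
    have hcont : ContinuousOn h (Set.Icc 0 1) :=
      (fun t _ => ((hderiv t).differentiableAt.continuousAt).continuousWithinAt)
    have := antitoneOn_of_deriv_nonpos (convex_Icc (0:ℝ) 1) hcont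
      (fun t ht => (hderiv t).differentiableAt.differentiableWithinAt)
      (fun t ht => by
        rw [(hderiv t).deriv]
        have ht' : 0 < t ∧ t < 1 := by
          simpa [Set.mem_Ioo] using (by rwa [interior_Icc] at ht : t ∈ Set.Ioo (0:ℝ) 1)
        have hb : ⟪gradient f (x + t • d) - gradient f x, d⟫ ≤ Lf * t * ‖d‖ ^ 2 := by
          calc ⟪gradient f (x + t • d) - gradient f x, d⟫
              ≤ ‖gradient f (x + t • d) - gradient f x‖ * ‖d‖ := real_inner_le_norm _ _
            _ ≤ (Lf * ‖(x + t • d) - x‖) * ‖d‖ := by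
                have := hlip (x + t • d) x
                nlinarith [norm_nonneg d]
            _ = Lf * t * ‖d‖ ^ 2 := by
                rw [add_sub_cancel_left, norm_smul]
                simp [abs_of_pos ht'.1]
                ring
        rw [inner_sub_left] at hb
        linarith)
    exact this (Set.left_mem_Icc.2 zero_le_one) (Set.right_mem_Icc.2 zero_le_one) zero_le_one
  simp only [hh] at hmono
  simp only [one_smul, zero_smul, add_zero, one_pow, zero_pow, mul_zero, zero_mul, sub_zero,
    one_mul] at hmono
  have : x + d = y := by simp [hd]
  rw [this] at hmono
  linarith

lemma le_of_sq_le_sq2 {a b : ℝ} (_ : 0 ≤ a) (hb : 0 ≤ b) (h : a ^ 2 ≤ b ^ 2) : a ≤ b := by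
  nlinarith

/-- An optimal solution is L-stationary for L > L(f), and the projection set is a singleton. -/
theorem stmt7 {n s : ℕ} (f : EuclideanSpace ℝ (Fin n) → ℝ) (hf : ContDiff ℝ 1 f)
    (Lf L : ℝ)
    (hlip : ∀ x y, ‖gradient f x - gradient f y‖ ≤ Lf * ‖x - y‖)
    (hL : Lf < L)
    (xs : EuclideanSpace ℝ (Fin n)) (hxs : xs ∈ Cs n s)
    (hopt : ∀ x ∈ Cs n s, f xs ≤ f x) :
    xs ∈ projCs n s (xs - (1 / L) • gradient f xs) ∧
    projCs n s (xs - (1 / L) • gradient f xs) = {xs} := by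
  rcases Nat.eq_zero_or_pos n with hn | hn
  · -- trivial case: the space is a subsingleton
    subst hn
    have hsub : Subsingleton (EuclideanSpace ℝ (Fin 0)) :=
      inferInstanceAs (Subsingleton (PiLp 2 fun _ : Fin 0 => ℝ))
    have hall : ∀ y : EuclideanSpace ℝ (Fin 0), y = xs := fun y => Subsingleton.elim y xs
    have hCs : ∀ y : EuclideanSpace ℝ (Fin 0), y ∈ Cs 0 s := by
      intro y; simp [Cs, norm0]
    constructor
    · exact ⟨hCs _, fun z hz => by rw [hall z]⟩
    · ext y; simp only [Set.mem_singleton_iff]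
      constructor
      · intro _; exact hall y
      · rintro rfl; exact ⟨hCs _, fun z hz => by rw [hall z]⟩
  · -- n ≥ 1 : Lf ≥ 0 hence L > 0
    have hdiff : Differentiable ℝ f := hf.differentiable one_ne_zero
    have hLf0 : 0 ≤ Lf := by
      have h := hlip (EuclideanSpace.single ⟨0, hn⟩ (1 : ℝ)) 0
      have hnorm : ‖EuclideanSpace.single (⟨0, hn⟩ : Fin n) (1 : ℝ) - 0‖ = 1 := by
        simp [EuclideanSpace.norm_single]
      rw [hnorm, mul_one] at h
      exact le_trans (norm_nonneg _) h
    have hL0 : 0 < L := lt_of_le_of_lt hLf0 hL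
    set g := gradient f xs with hg
    set w := xs - (1 / L) • g with hw
    have hxsw : ‖xs - w‖ ^ 2 = (1 / L) ^ 2 * ‖g‖ ^ 2 := by
      rw [hw]
      simp [norm_smul, mul_pow]
    -- key inequality
    have key : ∀ y ∈ Cs n s,
        ‖xs - w‖ ^ 2 + (1 - Lf / L) * ‖y - xs‖ ^ 2 ≤ ‖y - w‖ ^ 2 := by
      intro y hy
      have hdesc := descent f hdiff Lf hlip xs y
      have hop := hopt y hy
      have hinner : -(Lf / 2) * ‖y - xs‖ ^ 2 ≤ ⟪g, y - xs⟫ := by linarith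
      have hexp : y - w = (y - xs) + (1 / L) • g := by
        rw [hw]; abel
      have : ‖y - w‖ ^ 2 =
          ‖y - xs‖ ^ 2 + 2 * ((1/L) * ⟪g, y - xs⟫) + (1/L) ^ 2 * ‖g‖ ^ 2 := by
        rw [hexp, norm_add_sq_real, real_inner_smul_right, norm_smul, real_inner_comm]
        simp [mul_pow]
      rw [this, hxsw]
      have h2L : 0 < 2 / L := by positivity
      have : 2 * ((1/L) * ⟪g, y - xs⟫) ≥ 2 * ((1/L) * (-(Lf / 2) * ‖y - xs‖ ^ 2)) := by
        have h1L : 0 < 1 / L := by positivity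
        nlinarith
      have heq : 2 * ((1/L) * (-(Lf / 2) * ‖y - xs‖ ^ 2)) = -(Lf / L) * ‖y - xs‖ ^ 2 := by
        field_simp
      nlinarith
    have hcoef : 0 < 1 - Lf / L := by
      rw [sub_pos, div_lt_one hL0]; exact hL
    have hmem : xs ∈ projCs n s w := by
      refine ⟨hxs, fun z hz => ?_⟩
      have hk := key z hz
      have hd2 : (0:ℝ) ≤ ‖z - xs‖ ^ 2 := sq_nonneg _
      have hsq : ‖xs - w‖ ^ 2 ≤ ‖z - w‖ ^ 2 := by nlinarith
      exact le_of_sq_le_sq2 (norm_nonneg _) (norm_nonneg _) hsq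
    refine ⟨hmem, ?_⟩
    ext y
    simp only [Set.mem_singleton_iff]
    constructor
    · rintro ⟨hy, hymin⟩
      have h1 : ‖y - w‖ ≤ ‖xs - w‖ := hymin xs hxs
      have h2 : ‖y - w‖ ^ 2 ≤ ‖xs - w‖ ^ 2 :=
        pow_le_pow_left₀ (norm_nonneg _) h1 2
      have hk := key y hy
      have h3 : (1 - Lf / L) * ‖y - xs‖ ^ 2 ≤ 0 := by linarith
      have h4 : ‖y - xs‖ ^ 2 ≤ 0 := by
        by_contra hc
        push_neg at hc
        nlinarith
      have h5 : ‖y - xs‖ ^ 2 = 0 := le_antisymm h4 (sq_nonneg _)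
      have h6 : ‖y - xs‖ = 0 :=
        pow_eq_zero_iff (Nat.succ_ne_zero 1) |>.mp h5
      exact sub_eq_zero.mp (norm_eq_zero.mp h6)
    · rintro rfl; exact hmem
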